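/- Let Λ be a g-frame for H with bounds A_Λ, B_Λ and canonical dual ~Λ = {Λ_i S^{-1}} where S is the g-frame operator. Let 0 ≤ λ < √(A_Λ/B_Λ) and (m_i) satisfy 1 − λ ≤ m_i ≤ 1 + λ for all i. Then M_{m,Λ,~Λ} is invertible on H and ‖h‖/(1 + λ√(B_Λ/A_Λ)) ≤ ‖M_{m,Λ,~Λ}^{-1} h‖ ≤ ‖h‖/(1 − λ√(B_Λ/A_Λ)) for all h ∈ H. -/

import Mathlib

open ContinuousLinearMap
local notation "⟪" x ", " y "⟫" => @inner ℂ _ _ x y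

/-- Cauchy–Schwarz for infinite sums of nonnegative reals. -/
lemma tsum_cs_aux {J : Type*} {u v : J → ℝ} {U V W : ℝ}
    (hu0 : ∀ i, 0 ≤ u i) (hv0 : ∀ i, 0 ≤ v i)
    (hu : HasSum (fun i => u i ^ 2) U) (hv : HasSum (fun i => v i ^ 2) V)
    (huv : HasSum (fun i => u i * v i) W) :
    W ≤ Real.sqrt U * Real.sqrt V := by
  have hU0 : 0 ≤ U := hu.nonneg fun i => sq_nonneg _
  refine le_of_tendsto huv (Filter.Eventually.of_forall fun s => ?_)
  have h1 : (∑ i ∈ s, u i * v i) ^ 2 ≤ (∑ i ∈ s, u i ^ 2) * ∑ i ∈ s, v i ^ 2 :=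
    Finset.sum_mul_sq_le_sq_mul_sq s u v
  have h2 : (∑ i ∈ s, u i ^ 2) ≤ U := sum_le_hasSum s (fun i _ => sq_nonneg _) hu
  have h3 : (∑ i ∈ s, v i ^ 2) ≤ V := sum_le_hasSum s (fun i _ => sq_nonneg _) hv
  have h4 : (∑ i ∈ s, u i * v i) ^ 2 ≤ U * V :=
    h1.trans (mul_le_mul h2 h3 (Finset.sum_nonneg fun i _ => sq_nonneg _) hU0)
  have h5 : 0 ≤ ∑ i ∈ s, u i * v i :=
    Finset.sum_nonneg fun i _ => mul_nonneg (hu0 i) (hv0 i)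
  calc (∑ i ∈ s, u i * v i) = Real.sqrt ((∑ i ∈ s, u i * v i) ^ 2) := by
        rw [Real.sqrt_sq h5]
    _ ≤ Real.sqrt (U * V) := Real.sqrt_le_sqrt h4
    _ = Real.sqrt U * Real.sqrt V := Real.sqrt_mul hU0 V

theorem stmt9 {H : Type*} [NormedAddCommGroup H] [InnerProductSpace ℂ H] [CompleteSpace H]
    {J : Type*} {Hi : J → Type*} [∀ i, NormedAddCommGroup (Hi i)]
    [∀ i, InnerProductSpace ℂ (Hi i)] [∀ i, CompleteSpace (Hi i)]
    (Λ : ∀ i, H →L[ℂ] Hi i) (AΛ BΛ : ℝ) (hAΛ : 0 < AΛ)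
    (hΛ : ∀ f : H, ∃ s : ℝ, HasSum (fun i => ‖Λ i f‖ ^ 2) s ∧
      AΛ * ‖f‖ ^ 2 ≤ s ∧ s ≤ BΛ * ‖f‖ ^ 2)
    (S Sinv : H →L[ℂ] H)
    (hS : ∀ f : H, HasSum (fun i => adjoint (Λ i) (Λ i f)) (S f))
    (hSinv : S * Sinv = 1 ∧ Sinv * S = 1)
    (lam : ℝ) (hlam0 : 0 ≤ lam) (hlam : lam < Real.sqrt (AΛ / BΛ))
    (m : J → ℝ) (hm : ∀ i, 1 - lam ≤ m i ∧ m i ≤ 1 + lam)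
    (M : H →L[ℂ] H)
    (hM : ∀ f : H, HasSum (fun i => (m i : ℂ) • adjoint (Λ i) (Λ i (Sinv f))) (M f)) :
    ∃ Minv : H →L[ℂ] H, M * Minv = 1 ∧ Minv * M = 1 ∧
      ∀ h : H, ‖h‖ / (1 + lam * Real.sqrt (BΛ / AΛ)) ≤ ‖Minv h‖ ∧
        ‖Minv h‖ ≤ ‖h‖ / (1 - lam * Real.sqrt (BΛ / AΛ)) := by
  obtain ⟨hS1, hS2⟩ := hSinv
  -- B > 0
  have hBΛ : 0 < BΛ := by
    by_contra hB
    push_neg at hB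
    have h0 : Real.sqrt (AΛ / BΛ) = 0 := by
      rw [Real.sqrt_eq_zero']
      exact div_nonpos_iff.mpr (Or.inl ⟨hAΛ.le, hB⟩)
    rw [h0] at hlam
    linarith
  set β := lam * Real.sqrt (BΛ / AΛ) with hβdef
  have hβ0 : 0 ≤ β := mul_nonneg hlam0 (Real.sqrt_nonneg _)
  have hβ1 : β < 1 := by
    have hpos : 0 < Real.sqrt (BΛ / AΛ) :=
      Real.sqrt_pos.mpr (div_pos hBΛ hAΛ)
    have := mul_lt_mul_of_pos_right hlam hpos
    have heq : Real.sqrt (AΛ / BΛ) * Real.sqrt (BΛ / AΛ) = 1 := by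
      rw [← Real.sqrt_mul (div_pos hAΛ hBΛ).le]
      rw [div_mul_div_comm]
      rw [mul_comm BΛ AΛ]
      rw [div_self (by positivity)]
      exact Real.sqrt_one
    rw [heq] at this
    exact this
  -- the identity ⟪g, S g⟫ = frame sum
  have hinner : ∀ g : H, ∃ s : ℝ, HasSum (fun i => ‖Λ i g‖ ^ 2) s ∧
      (s : ℂ) = ⟪g, S g⟫ ∧ AΛ * ‖g‖ ^ 2 ≤ s := by
    intro g
    obtain ⟨s, hs, hA, _⟩ := hΛ g
    refine ⟨s, hs, ?_, hA⟩
    have h1 : HasSum (fun i => ⟪g, adjoint (Λ i) (Λ i g)⟫) ⟪g, S g⟫ :=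
      (innerSL ℂ g).hasSum (hS g)
    have h2 : HasSum (fun i => ((‖Λ i g‖ ^ 2 : ℝ) : ℂ)) ((s : ℂ)) :=
      Complex.ofRealCLM.hasSum hs
    have h3 : (fun i => ⟪g, adjoint (Λ i) (Λ i g)⟫) =
        fun i => ((‖Λ i g‖ ^ 2 : ℝ) : ℂ) := by
      funext i
      rw [adjoint_inner_right, inner_self_eq_norm_sq_to_K]
      norm_cast
    rw [h3] at h1
    exact (h2.unique h1)
  -- lower bound on S
  have hSlow : ∀ g : H, AΛ * ‖g‖ ≤ ‖S g‖ := by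
    intro g
    obtain ⟨s, _, hsg, hA⟩ := hinner g
    have h1 : s ≤ ‖g‖ * ‖S g‖ := by
      have : ‖(s : ℂ)‖ ≤ ‖g‖ * ‖S g‖ := hsg ▸ norm_inner_le_norm g (S g)
      rw [Complex.norm_real] at this
      exact (le_abs_self s).trans this
    rcases eq_or_lt_of_le (norm_nonneg g) with hg | hg
    · simp [← hg]
    · nlinarith
  have hSSinv : ∀ f : H, S (Sinv f) = f := by
    intro f
    have := DFunLike.congr_fun hS1 f
    simpa [mul_apply] using this
  -- the dual frame sum bound : ∑ ‖Λ i (Sinv f)‖² ≤ ‖f‖²/A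
  have hdual : ∀ f : H, ∃ s : ℝ, HasSum (fun i => ‖Λ i (Sinv f)‖ ^ 2) s ∧
      s ≤ ‖f‖ ^ 2 / AΛ := by
    intro f
    obtain ⟨s, hs, hsg, _⟩ := hinner (Sinv f)
    refine ⟨s, hs, ?_⟩
    rw [hSSinv f] at hsg
    have h1 : s ≤ ‖Sinv f‖ * ‖f‖ := by
      have : ‖(s : ℂ)‖ ≤ ‖Sinv f‖ * ‖f‖ := hsg ▸ norm_inner_le_norm (Sinv f) f
      rw [Complex.norm_real] at this
      exact (le_abs_self s).trans this
    have h2 : AΛ * ‖Sinv f‖ ≤ ‖f‖ := by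
      have := hSlow (Sinv f)
      rwa [hSSinv f] at this
    have h3 : ‖Sinv f‖ ≤ ‖f‖ / AΛ := by
      rw [le_div_iff₀ hAΛ]; linarith
    calc s ≤ ‖Sinv f‖ * ‖f‖ := h1
      _ ≤ (‖f‖ / AΛ) * ‖f‖ := by
          apply mul_le_mul_of_nonneg_right h3 (norm_nonneg _)
      _ = ‖f‖ ^ 2 / AΛ := by ring
  -- key estimate : ‖M f - f‖ ≤ β ‖f‖
  have key : ∀ f : H, ‖M f - f‖ ≤ β * ‖f‖ := by
    intro f
    set x := M f - f with hx
    have hSum : HasSum (fun i => ((m i : ℂ) - 1) • adjoint (Λ i) (Λ i (Sinv f))) x := by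
      have h1 := (hM f).sub (hS (Sinv f))
      rw [hSSinv f] at h1
      convert h1 using 2 with i
      rw [sub_smul, one_smul]
    have hInner : HasSum (fun i => ((m i : ℂ) - 1) * ⟪x, adjoint (Λ i) (Λ i (Sinv f))⟫)
        ⟪x, x⟫ := by
      have := (innerSL ℂ x).hasSum hSum
      convert this using 2 with i
      all_goals first | rfl | rw [innerSL_apply_apply, inner_smul_right]
    -- term norms
    obtain ⟨U, hU, hUA, hUB⟩ := hΛ x
    obtain ⟨V, hV, hVle⟩ := hdual f
    set u := fun i => ‖Λ i x‖ with hu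
    set v := fun i => ‖Λ i (Sinv f)‖ with hv
    have hterm : ∀ i, ‖((m i : ℂ) - 1) * ⟪x, adjoint (Λ i) (Λ i (Sinv f))⟫‖ ≤
        lam * (u i * v i) := by
      intro i
      rw [norm_mul]
      have hmi : ‖((m i : ℂ) - 1)‖ ≤ lam := by
        have : ((m i : ℂ) - 1) = ((m i - 1 : ℝ) : ℂ) := by push_cast; ring
        rw [this, Complex.norm_real, Real.norm_eq_abs, abs_le]
        constructor <;> [linarith [(hm i).1]; linarith [(hm i).2]]
      have hinner2 : ‖⟪x, adjoint (Λ i) (Λ i (Sinv f))⟫‖ ≤ u i * v i := by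
        rw [adjoint_inner_right]
        exact norm_inner_le_norm _ _
      exact mul_le_mul hmi hinner2 (norm_nonneg _) hlam0
    -- summability of u * v
    have huv_sum : Summable (fun i => u i * v i) := by
      apply Summable.of_nonneg_of_le
        (fun i => mul_nonneg (norm_nonneg _) (norm_nonneg _))
        (fun i => ?_) (((hU.summable.add hV.summable).div_const 2))
      have := sq_nonneg (u i - v i)
      show u i * v i ≤ (u i ^ 2 + v i ^ 2) / 2
      nlinarith
    have huvle : ∑' i, u i * v i ≤ Real.sqrt U * Real.sqrt V :=
      tsum_cs_aux (fun i => norm_nonneg _) (fun i => norm_nonneg _) hU hV huv_sum.hasSum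
    -- bound ‖⟪x,x⟫‖
    have hnorm_sum : Summable (fun i => ‖((m i : ℂ) - 1) * ⟪x, adjoint (Λ i) (Λ i (Sinv f))⟫‖) :=
      Summable.of_nonneg_of_le (fun i => norm_nonneg _) hterm
        (huv_sum.mul_left lam)
    have hxx : ‖⟪x, x⟫‖ ≤ lam * (Real.sqrt U * Real.sqrt V) := by
      calc ‖⟪x, x⟫‖ = ‖∑' i, ((m i : ℂ) - 1) * ⟪x, adjoint (Λ i) (Λ i (Sinv f))⟫‖ := by
            rw [hInner.tsum_eq]
        _ ≤ ∑' i, ‖((m i : ℂ) - 1) * ⟪x, adjoint (Λ i) (Λ i (Sinv f))⟫‖ :=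
            norm_tsum_le_tsum_norm hnorm_sum
        _ ≤ ∑' i, lam * (u i * v i) := Summable.tsum_le_tsum hterm hnorm_sum (huv_sum.mul_left lam)
        _ = lam * ∑' i, u i * v i := tsum_mul_left
        _ ≤ lam * (Real.sqrt U * Real.sqrt V) :=
            mul_le_mul_of_nonneg_left huvle hlam0
    have hxx2 : ‖x‖ ^ 2 ≤ lam * (Real.sqrt U * Real.sqrt V) := by
      have : ⟪x, x⟫ = ((‖x‖ : ℂ)) ^ 2 := inner_self_eq_norm_sq_to_K x
      rw [this] at hxx
      calc ‖x‖ ^ 2 = ‖((‖x‖ : ℂ)) ^ 2‖ := by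
            rw [norm_pow, Complex.norm_real, norm_norm]
        _ ≤ lam * (Real.sqrt U * Real.sqrt V) := hxx
    -- bounds on sqrt U, sqrt V
    have hsU : Real.sqrt U ≤ Real.sqrt BΛ * ‖x‖ := by
      calc Real.sqrt U ≤ Real.sqrt (BΛ * ‖x‖ ^ 2) := Real.sqrt_le_sqrt hUB
        _ = Real.sqrt BΛ * ‖x‖ := by
            rw [Real.sqrt_mul hBΛ.le, Real.sqrt_sq (norm_nonneg _)]
    have hsV : Real.sqrt V ≤ ‖f‖ / Real.sqrt AΛ := by
      calc Real.sqrt V ≤ Real.sqrt (‖f‖ ^ 2 / AΛ) := Real.sqrt_le_sqrt hVle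
        _ = ‖f‖ / Real.sqrt AΛ := by
            rw [Real.sqrt_div (sq_nonneg _), Real.sqrt_sq (norm_nonneg _)]
    have hfinal : ‖x‖ ^ 2 ≤ β * ‖f‖ * ‖x‖ := by
      have h6 : Real.sqrt U * Real.sqrt V ≤ (Real.sqrt BΛ * ‖x‖) * (‖f‖ / Real.sqrt AΛ) := by
        apply mul_le_mul hsU hsV (Real.sqrt_nonneg _)
        positivity
      have hBA : Real.sqrt (BΛ / AΛ) = Real.sqrt BΛ / Real.sqrt AΛ :=
        Real.sqrt_div hBΛ.le _
      have h7 : lam * (Real.sqrt U * Real.sqrt V) ≤ β * ‖f‖ * ‖x‖ := by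
        rw [hβdef, hBA]
        calc lam * (Real.sqrt U * Real.sqrt V)
            ≤ lam * ((Real.sqrt BΛ * ‖x‖) * (‖f‖ / Real.sqrt AΛ)) :=
              mul_le_mul_of_nonneg_left h6 hlam0
          _ = lam * (Real.sqrt BΛ / Real.sqrt AΛ) * ‖f‖ * ‖x‖ := by ring
      linarith
    rcases eq_or_lt_of_le (norm_nonneg x) with hx0 | hx0
    · rw [← hx0]
      exact mul_nonneg hβ0 (norm_nonneg f)
    · nlinarith
  -- operator norm bound on 1 - M
  have hE1 : ‖(1 : H →L[ℂ] H) - M‖ < 1 := by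
    have hle : ‖(1 : H →L[ℂ] H) - M‖ ≤ β := by
      apply opNorm_le_bound _ hβ0
      intro f
      have := key f
      rw [← norm_neg]
      simpa [sub_apply, one_apply, neg_sub] using this
    exact lt_of_le_of_lt hle hβ1
  set uM : (H →L[ℂ] H)ˣ := Units.oneSub ((1 : H →L[ℂ] H) - M) hE1 with huM
  have huMval : (uM : H →L[ℂ] H) = M := by
    rw [huM, Units.val_oneSub, sub_sub_cancel]
  have hMul : M * (↑uM⁻¹ : H →L[ℂ] H) = 1 := by rw [← huMval]; exact uM.mul_inv
  have hMul2 : (↑uM⁻¹ : H →L[ℂ] H) * M = 1 := by rw [← huMval]; exact uM.inv_mul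
  refine ⟨↑uM⁻¹, hMul, hMul2, ?_⟩
  intro h
  set y := (↑uM⁻¹ : H →L[ℂ] H) h with hy
  have hMy : M y = h := by
    have := DFunLike.congr_fun hMul h
    simpa [mul_apply] using this
  have hk : ‖h - y‖ ≤ β * ‖y‖ := by
    have := key y
    rwa [hMy] at this
  have h1β : 0 < 1 + β := by linarith
  have h2β : 0 < 1 - β := by linarith
  constructor
  · rw [div_le_iff₀ h1β]
    have : ‖h‖ ≤ ‖y‖ + ‖h - y‖ := by
      calc ‖h‖ = ‖y + (h - y)‖ := by rw [add_sub_cancel]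
        _ ≤ ‖y‖ + ‖h - y‖ := norm_add_le _ _
    linarith
  · rw [le_div_iff₀ h2β]
    have : ‖y‖ ≤ ‖h‖ + ‖h - y‖ := by
      calc ‖y‖ = ‖h - (h - y)‖ := by rw [sub_sub_cancel]
        _ ≤ ‖h‖ + ‖h - y‖ := norm_sub_le _ _
    linarith
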